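/- Let (X,G) be a minimal dynamical system equipped with an ergodic invariant Borel probability measure μ. Then the stabilizer G_x is finite for μ-almost every x ∈ X if and only if there exists a finite almost normal subgroup H of G such that μ(X_H) = 1, where X_H = {x ∈ X : G_x = gHg⁻¹ for some g ∈ G}. -/

import Mathlib

set_option linter.unusedSectionVars false


open MeasureTheory Pointwise

/-- The conjugate subgroup `g H g⁻¹`. -/
def conjSubgroup {G : Type*} [Group G] (g : G) (H : Subgroup G) : Subgroup G :=
  Subgroup.map (MulAut.conj g).toMonoidHom H

/-- The set `X_H` of points of `X` whose stabilizer is conjugate to `H`. -/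
def setXH (G : Type*) {X : Type*} [Group G] [MulAction G X] (H : Subgroup G) : Set X :=
  {x : X | ∃ g : G, MulAction.stabilizer G x = conjSubgroup g H}

namespace Stmt8Aux

variable {G : Type*} [Group G]

lemma mem_conjSubgroup {g k : G} {H : Subgroup G} :
    k ∈ conjSubgroup g H ↔ g⁻¹ * k * g ∈ H := by
  rw [conjSubgroup, Subgroup.mem_map_equiv, MulAut.conj_symm_apply]

lemma conjSubgroup_one (H : Subgroup G) : conjSubgroup 1 H = H := by
  ext k; simp [mem_conjSubgroup]

lemma conjSubgroup_conjSubgroup (g h : G) (H : Subgroup G) :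
    conjSubgroup g (conjSubgroup h H) = conjSubgroup (g * h) H := by
  ext k
  simp only [mem_conjSubgroup, mul_inv_rev]
  have : h⁻¹ * (g⁻¹ * k * g) * h = h⁻¹ * g⁻¹ * k * (g * h) := by group
  rw [this]

lemma conjSubgroup_injective (g : G) : Function.Injective (conjSubgroup g) := by
  intro H K h
  have := congrArg (conjSubgroup g⁻¹) h
  rwa [conjSubgroup_conjSubgroup, conjSubgroup_conjSubgroup, inv_mul_cancel,
    conjSubgroup_one, conjSubgroup_one] at this

lemma conjSubgroup_eq_self {n : G} {H : Subgroup G} (hn : n ∈ Subgroup.normalizer (H : Set G)) :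
    conjSubgroup n H = H := by
  ext k
  rw [mem_conjSubgroup]
  have := Subgroup.mem_normalizer_iff.mp hn (n⁻¹ * k * n)
  constructor
  · intro hk
    have h2 := this.mp hk
    convert h2 using 1; group
  · intro hk
    apply this.mpr
    convert hk using 1; group

lemma mem_normalizer_of_conj {n : G} {H : Subgroup G} (h : conjSubgroup n H = H) :
    n ∈ Subgroup.normalizer (H : Set G) := by
  rw [Subgroup.mem_normalizer_iff]
  intro g
  constructor
  · intro hg
    rw [← h, mem_conjSubgroup]
    convert hg using 1; group
  · intro hg
    rw [← h, mem_conjSubgroup] at hg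
    convert hg using 1; group

variable {X : Type*} [TopologicalSpace X] [T2Space X]
  [MeasurableSpace X] [BorelSpace X] [MulAction G X] [ContinuousConstSMul G X]

/-- The set of points with stabilizer exactly `H`. -/
def AH (X : Type*) [MulAction G X] (H : Subgroup G) : Set X :=
  {x : X | MulAction.stabilizer G x = H}

lemma stab_smul (g : G) (x : X) :
    MulAction.stabilizer G (g • x) = conjSubgroup g (MulAction.stabilizer G x) :=
  MulAction.stabilizer_smul_eq_stabilizer_map_conj g x

lemma mem_AH_iff {x : X} {H : Subgroup G} : x ∈ AH X H ↔ ∀ g : G, (g • x = x ↔ g ∈ H) := by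
  constructor
  · intro h g; rw [← h]; exact Iff.rfl.symm.trans Iff.rfl
  · intro h
    ext g
    rw [MulAction.mem_stabilizer_iff, h g]

lemma measurableSet_AH [Countable G] (H : Subgroup G) : MeasurableSet (AH X H) := by
  have : AH X H = ⋂ g : G, {x : X | g • x = x ↔ g ∈ H} := by
    ext x
    simp only [Set.mem_iInter, Set.mem_setOf_eq]
    exact mem_AH_iff
  rw [this]
  refine MeasurableSet.iInter fun g => ?_
  have hcl : IsClosed {x : X | g • x = x} := isClosed_eq (continuous_const_smul g) continuous_id
  by_cases hg : g ∈ H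
  · have : {x : X | g • x = x ↔ g ∈ H} = {x : X | g • x = x} := by
      ext x; simp [hg]
    rw [this]; exact hcl.measurableSet
  · have : {x : X | g • x = x ↔ g ∈ H} = {x : X | g • x = x}ᶜ := by
      ext x; simp [hg]
    rw [this]; exact hcl.measurableSet.compl

lemma smul_AH (g : G) (H : Subgroup G) : g • AH X H = AH X (conjSubgroup g H) := by
  ext x
  rw [Set.mem_smul_set_iff_inv_smul_mem]
  have key : MulAction.stabilizer G x = conjSubgroup g (MulAction.stabilizer G (g⁻¹ • x)) := by
    conv_lhs => rw [← smul_inv_smul g x]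
    exact stab_smul g (g⁻¹ • x)
  constructor
  · intro h
    show MulAction.stabilizer G x = _
    rw [key, show MulAction.stabilizer G (g⁻¹ • x) = H from h]
  · intro h
    show MulAction.stabilizer G (g⁻¹ • x) = H
    apply conjSubgroup_injective g
    rw [← key]; exact h

lemma disjoint_AH {H K : Subgroup G} (h : H ≠ K) : Disjoint (AH X H) (AH X K) := by
  rw [Set.disjoint_left]
  intro x hx hx'
  exact h (hx.symm.trans hx')

lemma setXH_eq (H : Subgroup G) : setXH G H = ⋃ g : G, AH X (conjSubgroup g H) := by
  ext x
  simp only [setXH, Set.mem_iUnion, Set.mem_setOf_eq]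
  exact Iff.rfl

lemma measurableSet_setXH [Countable G] (H : Subgroup G) :
    MeasurableSet (setXH G H : Set X) := by
  rw [setXH_eq (X := X)]
  exact MeasurableSet.iUnion fun g => measurableSet_AH _

lemma smul_setXH (g : G) (H : Subgroup G) : g • (setXH G H : Set X) = setXH G H := by
  ext x
  rw [Set.mem_smul_set_iff_inv_smul_mem]
  constructor
  · rintro ⟨k, hk⟩
    refine ⟨g * k, ?_⟩
    rw [← conjSubgroup_conjSubgroup, ← hk, ← stab_smul, smul_inv_smul]
  · rintro ⟨k, hk⟩
    refine ⟨g⁻¹ * k, ?_⟩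
    rw [← conjSubgroup_conjSubgroup, ← hk, ← stab_smul]

lemma measurableSet_smul (g : G) {A : Set X} (hA : MeasurableSet A) :
    MeasurableSet (g • A) := by
  have : g • A = (fun x : X => g⁻¹ • x) ⁻¹' A := by
    ext x; rw [Set.mem_smul_set_iff_inv_smul_mem]; rfl
  rw [this]
  exact (continuous_const_smul g⁻¹).measurable hA

end Stmt8Aux

open Stmt8Aux

/-- Let `(X,G)` be a minimal dynamical system with an ergodic invariant Borel probability measure
`μ`. Then μ-almost every stabilizer is finite if and only if there exists a finite almost normal
subgroup `H` of `G` with `μ(X_H) = 1`. -/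
theorem stmt8 {G X : Type*} [Group G] [Countable G]
    [TopologicalSpace X] [CompactSpace X] [T2Space X]
    [MeasurableSpace X] [BorelSpace X]
    [MulAction G X] [ContinuousConstSMul G X]
    (hmin : ∀ x : X, Dense (MulAction.orbit G x))
    (μ : Measure X) [IsProbabilityMeasure μ]
    (hinv : ∀ (g : G) (A : Set X), μ (g • A) = μ A)
    (herg : ∀ A : Set X, MeasurableSet A → (∀ g : G, g • A = A) → μ A = 0 ∨ μ A = 1) :
    (∀ᵐ x ∂μ, (MulAction.stabilizer G x : Set G).Finite) ↔
      ∃ H : Subgroup G, (H : Set G).Finite ∧ (Subgroup.normalizer (H : Set G)).FiniteIndex ∧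
        μ (setXH G H : Set X) = 1 := by
  constructor
  · -- forward direction
    intro hae
    -- the countable family of finite subgroups
    set 𝒮 : Set (Subgroup G) := {H : Subgroup G | (H : Set G).Finite} with h𝒮
    have hcount : 𝒮.Countable := by
      have h1 : {s : Set G | s.Finite}.Countable := by
        have := Set.countable_setOf_finite_subset (Set.countable_univ (α := G))
        refine this.mono ?_
        intro s hs
        exact ⟨hs, Set.subset_univ s⟩
      have h2 : 𝒮 = (SetLike.coe : Subgroup G → Set G) ⁻¹' {s : Set G | s.Finite} := rfl
      rw [h2]
      exact h1.preimage SetLike.coe_injective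
    have hunion : {x : X | (MulAction.stabilizer G x : Set G).Finite} = ⋃ H ∈ 𝒮, AH X H := by
      ext x
      simp only [Set.mem_iUnion, Set.mem_setOf_eq, h𝒮]
      constructor
      · intro hx
        exact ⟨MulAction.stabilizer G x, hx, rfl⟩
      · rintro ⟨H, hH, hx⟩
        rw [show x ∈ AH X H ↔ MulAction.stabilizer G x = H from Iff.rfl] at hx
        rw [hx]; exact hH
    have hc : μ (⋃ H ∈ 𝒮, AH X H)ᶜ = 0 := by
      rw [← hunion, Set.compl_setOf]
      exact ae_iff.mp hae
    -- find a finite subgroup whose exact-stabilizer set has positive measure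
    have hex : ∃ H ∈ 𝒮, μ (AH X H) ≠ 0 := by
      by_contra hcon
      push_neg at hcon
      have hz : μ (⋃ H ∈ 𝒮, AH X H) = 0 :=
        (measure_biUnion_null_iff hcount).mpr hcon
      have : (1 : ENNReal) ≤ 0 := by
        calc (1 : ENNReal) = μ Set.univ := measure_univ.symm
        _ = μ ((⋃ H ∈ 𝒮, AH X H) ∪ (⋃ H ∈ 𝒮, AH X H)ᶜ) := by rw [Set.union_compl_self]
        _ ≤ μ (⋃ H ∈ 𝒮, AH X H) + μ (⋃ H ∈ 𝒮, AH X H)ᶜ := measure_union_le _ _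
        _ = 0 := by rw [hz, hc, add_zero]
      simp at this
    obtain ⟨H, hHfin, hHpos⟩ := hex
    refine ⟨H, hHfin, ?_, ?_⟩
    · -- the normalizer has finite index
      set N := Subgroup.normalizer (H : Set G) with hN
      -- the family of exact-stabilizer sets, indexed by the quotient
      have hwd : ∀ a b : G, (QuotientGroup.leftRel N) a b →
          AH X (conjSubgroup a H) = AH X (conjSubgroup b H) := by
        intro a b hab
        rw [QuotientGroup.leftRel_apply] at hab
        have : conjSubgroup b H = conjSubgroup a H := by
          have hb : b = a * (a⁻¹ * b) := by group
          rw [hb, ← conjSubgroup_conjSubgroup, conjSubgroup_eq_self hab]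
        rw [this]
      let s : G ⧸ N → Set X := Quotient.lift (fun g => AH X (conjSubgroup g H)) hwd
      have hs_mk : ∀ g : G, s ⟦g⟧ = AH X (conjSubgroup g H) := fun g => rfl
      have hs_meas : ∀ q : G ⧸ N, MeasurableSet (s q) := by
        intro q
        induction q using Quotient.inductionOn with
        | h g => rw [hs_mk]; exact measurableSet_AH _
      have hs_disj : Pairwise (Function.onFun Disjoint s) := by
        intro q q' hqq'
        induction q using Quotient.inductionOn with
        | h a =>
        induction q' using Quotient.inductionOn with
        | h b =>
        refine disjoint_AH ?_
        intro hconj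
        apply hqq'
        have hmem : a⁻¹ * b ∈ N := by
          apply mem_normalizer_of_conj
          have h5 : conjSubgroup a (conjSubgroup (a⁻¹ * b) H) = conjSubgroup a H := by
            rw [conjSubgroup_conjSubgroup]
            have h6 : a * (a⁻¹ * b) = b := by group
            rw [h6, hconj]
          exact conjSubgroup_injective a h5
        exact Quotient.sound' (QuotientGroup.leftRel_apply.mpr hmem)
      have hs_measval : ∀ q : G ⧸ N, μ (s q) = μ (AH X H) := by
        intro q
        induction q using Quotient.inductionOn with
        | h g =>
        rw [hs_mk, ← smul_AH, hinv]
      -- the quotient is finite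
      haveI : Countable (G ⧸ N) := Quotient.countable
      have hfin : Finite (G ⧸ N) := by
        rcases finite_or_infinite (G ⧸ N) with h | h
        · exact h
        · exfalso
          have h1 : μ (⋃ q : G ⧸ N, s q) = ∑' q : G ⧸ N, μ (s q) :=
            measure_iUnion hs_disj hs_meas
          have h2 : (∑' _ : G ⧸ N, μ (AH X H)) = ⊤ :=
            ENNReal.tsum_const_eq_top_of_ne_zero hHpos
          have h3 : μ (⋃ q : G ⧸ N, s q) = ⊤ := by
            rw [h1]
            rw [← h2]
            exact tsum_congr hs_measval
          have h4 : μ (⋃ q : G ⧸ N, s q) ≤ 1 := by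
            rw [← (measure_univ (μ := μ))]
            exact measure_mono (Set.subset_univ _)
          rw [h3] at h4
          exact (lt_irrefl _ (lt_of_le_of_lt h4 ENNReal.one_lt_top))
      exact @Subgroup.finiteIndex_of_finite_quotient G _ N hfin
    · -- μ (setXH G H) = 1
      have hmeas : MeasurableSet (setXH G H : Set X) := measurableSet_setXH H
      rcases herg _ hmeas (fun g => smul_setXH g H) with h0 | h1
      · exfalso
        apply hHpos
        refine le_antisymm ?_ zero_le
        rw [← h0]
        refine measure_mono ?_
        intro x hx
        exact ⟨1, by rw [show x ∈ AH X H ↔ _ from Iff.rfl] at hx; rw [hx, conjSubgroup_one]⟩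
      · exact h1
  · -- backward direction
    rintro ⟨H, hHfin, _, hμ⟩
    have hmeas : MeasurableSet (setXH G H : Set X) := measurableSet_setXH H
    have hcompl : μ (setXH G H : Set X)ᶜ = 0 := by
      rw [measure_compl hmeas (measure_ne_top μ _), hμ, measure_univ, tsub_self]
    rw [ae_iff]
    refine measure_mono_null ?_ hcompl
    intro x hx
    simp only [Set.mem_setOf_eq] at hx
    intro hxX
    apply hx
    obtain ⟨g, hg⟩ := hxX
    rw [hg]
    rw [conjSubgroup, Subgroup.coe_map]
    exact hHfin.image _
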